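/- arXiv:1804.02997 — 5 statements merged into one kernel-verified Lean document; each statement's English description precedes it below -/
import Mathlib

section
/- For x = Σ_{n∈ℤ} α_n T^n a in A_a, the generalized sample L_j x(rm) := ⟨x, (T*)^{-rm} b_j⟩_H equals ⟨F, g_j(w) e^{2πirmw}⟩_{L²(0,1)}, where F(w) = Σ_n α_n e^{2πinw} and g_j(w) = Σ_{k∈ℤ} ⟨(T*)^k b_j, a⟩_H e^{2πikw}. -/
open scoped ComplexInnerProductSpace ComplexConjugate

/-- For `x = ∑ₙ αₙ Tⁿ a ∈ 𝒜_a`, the generalized sample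
`𝓛_j x(rm) := ⟨x, (T*)^{-rm} b_j⟩_H` equals `⟨F, g_j(w) e^{2πirmw}⟩_{L²(0,1)}`, where
`F(w) = ∑ₙ αₙ e^{2πinw}` and `g_j(w) = ∑ₖ ⟨(T*)ᵏ b_j, a⟩ e^{2πikw}`.  By Parseval this
inner product is the sum `∑ₙ αₙ conj⟨(T*)^{n-rm} b_j, a⟩`; everything is phrased in the
mathematician's convention `⟨u,v⟩ = ⟪v,u⟫_ℂ` (Mathlib's inner product is conjugate-linear
in its first slot).  `S` denotes the (invertible) adjoint `T*` of `T`. -/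
theorem stmt_1 {H : Type*} [NormedAddCommGroup H] [InnerProductSpace ℂ H] [CompleteSpace H]
    (T S : H ≃L[ℂ] H)
    (hS : ∀ x y : H, ⟪T x, y⟫ = ⟪x, S y⟫)
    (a : H)
    -- `{Tⁿ a}ₙ` is a Riesz sequence in `H`
    (hRiesz : ∃ A B : ℝ, 0 < A ∧ 0 < B ∧ ∀ (α : lp (fun _ : ℤ => ℂ) 2) (x : H),
      HasSum (fun n : ℤ => α n • ((T ^ n) a)) x →
        A * ‖α‖ ^ 2 ≤ ‖x‖ ^ 2 ∧ ‖x‖ ^ 2 ≤ B * ‖α‖ ^ 2)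
    (s : ℕ) (b : Fin s → H) (r : ℕ) (hr : 1 ≤ r)
    (α : ℤ → ℂ) (x : H) (hx : HasSum (fun n : ℤ => α n • ((T ^ n) a)) x)
    (j : Fin s) (m : ℤ) :
    -- `𝓛_j x(rm) = ⟨F, g_j e^{2πirmw}⟩_{L²(0,1)} = ∑ₙ αₙ · conj ⟨(T*)^{n-rm} b_j, a⟩`
    HasSum (fun n : ℤ => α n * conj ⟪a, (S ^ (n - r * m)) (b j)⟫)
      ⟪(S ^ (-(r * m : ℤ))) (b j), x⟫ := by
  have hmul : ∀ (e f : H ≃L[ℂ] H) (u : H), (e * f) u = e (f u) := fun _ _ _ => rfl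
  have hone : ∀ u : H, (1 : H ≃L[ℂ] H) u = u := fun _ => rfl
  have hzadd : ∀ (e : H ≃L[ℂ] H) (p q : ℤ) (u : H),
      (e ^ (p + q)) u = (e ^ p) ((e ^ q) u) := by
    intro e p q u; rw [zpow_add, hmul]
  have hSnat : ∀ (n : ℕ) (u v : H), ⟪(T ^ (n : ℤ)) u, v⟫ = ⟪u, (S ^ (n : ℤ)) v⟫ := by
    intro n
    induction n with
    | zero => intro u v; simp only [Nat.cast_zero, zpow_zero, hone]
    | succ k ih =>
      intro u v
      have h1 : ((k + 1 : ℕ) : ℤ) = (k : ℤ) + 1 := by push_cast; ring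
      rw [h1]
      have h2 : (T ^ ((k : ℤ) + 1)) u = (T ^ (k : ℤ)) (T u) := by
        rw [hzadd, zpow_one]
      have h4 : (S ^ ((k : ℤ) + 1)) v = S ((S ^ (k : ℤ)) v) := by
        rw [add_comm, hzadd, zpow_one]
      rw [h2, ih (T u) v, h4, ← hS]
  have hSint : ∀ (n : ℤ) (u v : H), ⟪(T ^ n) u, v⟫ = ⟪u, (S ^ n) v⟫ := by
    intro n u v
    rcases le_or_gt 0 n with hn | hn
    · obtain ⟨k, rfl⟩ := Int.eq_ofNat_of_zero_le hn
      exact hSnat k u v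
    · obtain ⟨k, hk⟩ : ∃ k : ℕ, n = -(k : ℤ) := ⟨n.natAbs, by omega⟩
      subst hk
      have hcanc : ∀ (e : H ≃L[ℂ] H) (w : H), (e ^ (k : ℤ)) ((e ^ (-(k : ℤ))) w) = w := by
        intro e w
        rw [← hzadd]
        simp only [add_neg_cancel, zpow_zero, hone]
      have := hSnat k ((T ^ (-(k : ℤ))) u) ((S ^ (-(k : ℤ))) v)
      rw [hcanc T u, hcanc S v] at this
      exact this.symm
  have key : ∀ n : ℤ, ⟪(S ^ (-(r * m : ℤ))) (b j), (T ^ n) a⟫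
      = conj ⟪a, (S ^ (n - r * m)) (b j)⟫ := by
    intro n
    rw [← inner_conj_symm]
    congr 1
    rw [hSint n a ((S ^ (-(r * m : ℤ))) (b j)), ← hzadd,
      show n + -(r * m : ℤ) = n - r * m from by ring]
  have h := hx.mapL (innerSL ℂ ((S ^ (-(r * m : ℤ))) (b j)))
  simp only [innerSL_apply_apply, inner_smul_right] at h
  convert h using 2 with n
  · rfl
  · rw [key n]
end

section
/- Suppose h_j, g_j ∈ ℓ¹(ℤ) for j=1,...,s. The analysis–synthesis filter bank with downsampling r gives perfect reconstruction, i.e., α_n = Σ_{j=1}^s Σ_{m∈ℤ} (α ∗ h_j)(rm) g_j(n − rm) for all α ∈ ℓ²(ℤ) and n ∈ ℤ, if and only if the sequences {conj(h_j)(rm − ·)}_{m∈ℤ, j=1..s} and {g_j(· − rm)}_{m∈ℤ, j=1..s} form a pair of dual frames in ℓ²(ℤ). -/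
open scoped ComplexInnerProductSpace ComplexConjugate

section Aux

/-- Evaluation at a coordinate transports `HasSum` from `ℓ²(ℤ)` to `ℂ`. -/
lemma lp2_eval_hasSum {ι : Type*} (f : ι → lp (fun _ : ℤ => ℂ) 2)
    (x : lp (fun _ : ℤ => ℂ) 2) (hf : HasSum f x) (n : ℤ) :
    HasSum (fun i => f i n) (x n) := by
  let φ : lp (fun _ : ℤ => ℂ) 2 →+ ℂ :=
  { toFun := fun y => y n
    map_zero' := by simp
    map_add' := fun a b => by show (↑(a + b) : ℤ → ℂ) n = _; rw [lp.coeFn_add]; rfl }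
  have hlip : LipschitzWith 1 φ := LipschitzWith.of_dist_le_mul (fun a b => by
    have h1 : φ a - φ b = (a - b) n := by
      show (↑a : ℤ → ℂ) n - (↑b : ℤ → ℂ) n = _; rw [lp.coeFn_sub]; rfl
    simp only [dist_eq_norm, one_mul, h1]
    simpa using lp.norm_apply_le_norm (by norm_num) (a - b) n)
  exact hf.map φ hlip.continuous

lemma lp2_summable_sq (x : lp (fun _ : ℤ => ℂ) 2) : Summable fun k => ‖x k‖ ^ 2 := by
  have := (lp.memℓp x).summable (p := 2) (by norm_num)
  simpa [ENNReal.toReal_ofNat, Real.rpow_natCast] using this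

lemma lp2_norm_sq_eq (x : lp (fun _ : ℤ => ℂ) 2) : ‖x‖ ^ 2 = ∑' n, ‖x n‖ ^ 2 := by
  have := lp.norm_rpow_eq_tsum (p := 2) (by norm_num) x
  simpa [ENNReal.toReal_ofNat, Real.rpow_natCast] using this

/-- Cauchy–Schwarz inequality for infinite sums of nonnegative reals. -/
lemma tsum_cs {f g : ℤ → ℝ} (hf0 : ∀ k, 0 ≤ f k) (hg0 : ∀ k, 0 ≤ g k)
    (hf : Summable fun k => f k ^ 2) (hg : Summable fun k => g k ^ 2) :
    (∑' k, f k * g k) ^ 2 ≤ (∑' k, f k ^ 2) * ∑' k, g k ^ 2 := by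
  have hfg : Summable fun k => f k * g k := by
    refine Summable.of_nonneg_of_le (fun k => mul_nonneg (hf0 k) (hg0 k)) (fun k => ?_)
      ((hf.add hg).div_const 2)
    have := sq_nonneg (f k - g k); nlinarith [this]
  have hA : 0 ≤ (∑' k, f k ^ 2) * ∑' k, g k ^ 2 :=
    mul_nonneg (tsum_nonneg fun k => sq_nonneg _) (tsum_nonneg fun k => sq_nonneg _)
  have key : ∀ t : Finset ℤ, ∑ k ∈ t, f k * g k ≤ Real.sqrt ((∑' k, f k ^ 2) * ∑' k, g k ^ 2) := by
    intro t
    have h1 := Finset.sum_mul_sq_le_sq_mul_sq t f g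
    have h2 : ∑ k ∈ t, f k ^ 2 ≤ ∑' k, f k ^ 2 := Summable.sum_le_tsum t (fun _ _ => sq_nonneg _) hf
    have h3 : ∑ k ∈ t, g k ^ 2 ≤ ∑' k, g k ^ 2 := Summable.sum_le_tsum t (fun _ _ => sq_nonneg _) hg
    have h4 : (∑ k ∈ t, f k * g k) ^ 2 ≤ (∑' k, f k ^ 2) * ∑' k, g k ^ 2 := by
      refine h1.trans (mul_le_mul h2 h3 ?_ ?_)
      · exact Finset.sum_nonneg fun _ _ => sq_nonneg _
      · exact tsum_nonneg fun _ => sq_nonneg _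
    have h5 : 0 ≤ ∑ k ∈ t, f k * g k := Finset.sum_nonneg fun k _ => mul_nonneg (hf0 k) (hg0 k)
    exact (Real.le_sqrt h5 hA).2 h4
  have h6 : ∑' k, f k * g k ≤ Real.sqrt ((∑' k, f k ^ 2) * ∑' k, g k ^ 2) :=
    Summable.tsum_le_of_sum_le hfg key
  calc (∑' k, f k * g k) ^ 2 ≤ Real.sqrt ((∑' k, f k ^ 2) * ∑' k, g k ^ 2) ^ 2 := by
        refine pow_le_pow_left₀ (tsum_nonneg fun k => mul_nonneg (hf0 k) (hg0 k)) h6 2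
    _ = _ := Real.sq_sqrt hA

/-- Norm bound for finite sections of the synthesis operator. -/
lemma synth_bound {g : ℤ → ℂ} (hg : Summable fun n => ‖g n‖) {r : ℕ} (hr : 0 < r)
    {V : ℤ → lp (fun _ : ℤ => ℂ) 2} (hV : ∀ m n, V m n = g (n - (r : ℤ) * m))
    (d : ℤ → ℂ) (t : Finset ℤ) :
    ‖∑ m ∈ t, d m • V m‖ ^ 2 ≤ (∑' n, ‖g n‖) ^ 2 * ∑ m ∈ t, ‖d m‖ ^ 2 := by
  set Hg := ∑' n, ‖g n‖ with hHg
  have hHg0 : 0 ≤ Hg := tsum_nonneg fun _ => norm_nonneg _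
  have hr' : (r : ℤ) ≠ 0 := by exact_mod_cast hr.ne'
  have einj : ∀ n : ℤ, Function.Injective fun m : ℤ => n - (r : ℤ) * m := by
    intro n a b hab
    simp only [sub_right_inj] at hab
    exact mul_left_cancel₀ hr' hab
  set x := ∑ m ∈ t, d m • V m with hxdef
  have hx : ∀ n, x n = ∑ m ∈ t, d m * g (n - (r : ℤ) * m) := by
    intro n
    have : (↑x : ℤ → ℂ) = ∑ m ∈ t, (↑(d m • V m) : ℤ → ℂ) := lp.coeFn_sum _ t
    rw [this, Finset.sum_apply]
    refine Finset.sum_congr rfl fun m _ => ?_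
    rw [lp.coeFn_smul, Pi.smul_apply, smul_eq_mul, hV]
  have step1 : ∀ n : ℤ, ∑ m ∈ t, ‖g (n - (r : ℤ) * m)‖ ≤ Hg := by
    intro n
    have := Finset.sum_map t ⟨fun m : ℤ => n - (r : ℤ) * m, einj n⟩ (fun l => ‖g l‖)
    simp only [Function.Embedding.coeFn_mk] at this
    rw [← this]
    exact Summable.sum_le_tsum _ (fun _ _ => norm_nonneg _) hg
  have step2 : ∀ n : ℤ, ‖x n‖ ^ 2 ≤ Hg * ∑ m ∈ t, ‖d m‖ ^ 2 * ‖g (n - (r : ℤ) * m)‖ := by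
    intro n
    have hxn : ‖x n‖ ≤ ∑ m ∈ t, ‖d m‖ * ‖g (n - (r : ℤ) * m)‖ := by
      rw [hx n]
      exact (norm_sum_le _ _).trans_eq (by simp [norm_mul])
    have cs := Finset.sum_mul_sq_le_sq_mul_sq t
      (fun m => ‖d m‖ * Real.sqrt ‖g (n - (r : ℤ) * m)‖)
      (fun m => Real.sqrt ‖g (n - (r : ℤ) * m)‖)
    have e1 : ∀ m ∈ t, ‖d m‖ * Real.sqrt ‖g (n - (r : ℤ) * m)‖ * Real.sqrt ‖g (n - (r : ℤ) * m)‖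
        = ‖d m‖ * ‖g (n - (r : ℤ) * m)‖ := fun m _ => by
      rw [mul_assoc, Real.mul_self_sqrt (norm_nonneg _)]
    have e2 : ∀ m ∈ t, (‖d m‖ * Real.sqrt ‖g (n - (r : ℤ) * m)‖) ^ 2
        = ‖d m‖ ^ 2 * ‖g (n - (r : ℤ) * m)‖ := fun m _ => by
      rw [mul_pow, Real.sq_sqrt (norm_nonneg _)]
    have e3 : ∀ m ∈ t, (Real.sqrt ‖g (n - (r : ℤ) * m)‖) ^ 2 = ‖g (n - (r : ℤ) * m)‖ :=
      fun m _ => Real.sq_sqrt (norm_nonneg _)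
    rw [Finset.sum_congr rfl e1, Finset.sum_congr rfl e2, Finset.sum_congr rfl e3] at cs
    have h4 : ‖x n‖ ^ 2 ≤ (∑ m ∈ t, ‖d m‖ * ‖g (n - (r : ℤ) * m)‖) ^ 2 :=
      pow_le_pow_left₀ (norm_nonneg _) hxn 2
    refine h4.trans (cs.trans ?_)
    rw [mul_comm]
    refine mul_le_mul_of_nonneg_right (step1 n) ?_
    exact Finset.sum_nonneg fun m _ => mul_nonneg (sq_nonneg _) (norm_nonneg _)
  have sgm : ∀ m : ℤ, Summable fun n : ℤ => ‖g (n - (r : ℤ) * m)‖ := fun m =>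
    hg.comp_injective (sub_left_injective)
  have sR0 : ∀ m ∈ t, Summable fun n : ℤ => ‖d m‖ ^ 2 * ‖g (n - (r : ℤ) * m)‖ := fun m _ =>
    (sgm m).mul_left _
  have sR : Summable fun n : ℤ => Hg * ∑ m ∈ t, ‖d m‖ ^ 2 * ‖g (n - (r : ℤ) * m)‖ :=
    (summable_sum sR0).mul_left Hg
  have tg : ∀ m : ℤ, ∑' n : ℤ, ‖g (n - (r : ℤ) * m)‖ = Hg := fun m =>
    (Equiv.subRight ((r : ℤ) * m)).tsum_eq fun l => ‖g l‖
  calc ‖x‖ ^ 2 = ∑' n, ‖x n‖ ^ 2 := lp2_norm_sq_eq x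
    _ ≤ ∑' n : ℤ, Hg * ∑ m ∈ t, ‖d m‖ ^ 2 * ‖g (n - (r : ℤ) * m)‖ :=
        Summable.tsum_le_tsum step2 (lp2_summable_sq x) sR
    _ = Hg * ∑' n : ℤ, ∑ m ∈ t, ‖d m‖ ^ 2 * ‖g (n - (r : ℤ) * m)‖ := tsum_mul_left
    _ = Hg * ∑ m ∈ t, ∑' n : ℤ, ‖d m‖ ^ 2 * ‖g (n - (r : ℤ) * m)‖ := by
        rw [Summable.tsum_finsetSum sR0]
    _ = Hg * ∑ m ∈ t, ‖d m‖ ^ 2 * Hg := by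
        congr 1
        exact Finset.sum_congr rfl fun m _ => by rw [tsum_mul_left, tg m]
    _ = Hg ^ 2 * ∑ m ∈ t, ‖d m‖ ^ 2 := by
        rw [← Finset.sum_mul]; ring

/-- The analysis coefficients of an `ℓ²` sequence are square-summable. -/
lemma anal_summable {h : ℤ → ℂ} (hh : Summable fun n => ‖h n‖) {r : ℕ} (hr : 0 < r)
    (α : lp (fun _ : ℤ => ℂ) 2) :
    Summable fun m : ℤ => ‖∑' k : ℤ, α k * h ((r : ℤ) * m - k)‖ ^ 2 := by
  set Hh := ∑' n, ‖h n‖ with hHh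
  have hHh0 : 0 ≤ Hh := tsum_nonneg fun _ => norm_nonneg _
  have hr' : (r : ℤ) ≠ 0 := by exact_mod_cast hr.ne'
  have hbd : ∀ l : ℤ, ‖h l‖ ≤ Hh := fun l => Summable.le_tsum hh l fun _ _ => norm_nonneg _
  have aα : Summable fun k : ℤ => ‖α k‖ ^ 2 := lp2_summable_sq α
  have αbd : ∀ k : ℤ, ‖α k‖ ≤ ‖α‖ := fun k => lp.norm_apply_le_norm (by norm_num) α k
  have injk : ∀ m : ℤ, Function.Injective fun k : ℤ => (r : ℤ) * m - k := fun m a b hab => by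
    simpa [sub_right_inj] using hab
  have injm : ∀ k : ℤ, Function.Injective fun m : ℤ => (r : ℤ) * m - k := fun k a b hab => by
    simp only [sub_left_inj] at hab
    exact mul_left_cancel₀ hr' hab
  have sum_h_shift : ∀ m : ℤ, Summable fun k : ℤ => ‖h ((r : ℤ) * m - k)‖ := fun m =>
    hh.comp_injective (injk m)
  have tsum_h_shift : ∀ m : ℤ, ∑' k : ℤ, ‖h ((r : ℤ) * m - k)‖ = Hh := fun m =>
    (Equiv.subLeft ((r : ℤ) * m)).tsum_eq fun l => ‖h l‖
  have sf2 : ∀ m : ℤ, Summable fun k : ℤ => ‖α k‖ ^ 2 * ‖h ((r : ℤ) * m - k)‖ := by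
    intro m
    refine Summable.of_nonneg_of_le (fun k => mul_nonneg (sq_nonneg _) (norm_nonneg _))
      (fun k => ?_) (aα.mul_right Hh)
    exact mul_le_mul_of_nonneg_left (hbd _) (sq_nonneg _)
  set w : ℤ → ℝ := fun m => ∑' k : ℤ, ‖α k‖ ^ 2 * ‖h ((r : ℤ) * m - k)‖ with hw
  have bound : ∀ m : ℤ, ‖∑' k : ℤ, α k * h ((r : ℤ) * m - k)‖ ^ 2 ≤ Hh * w m := by
    intro m
    have sprod : Summable fun k : ℤ => ‖α k * h ((r : ℤ) * m - k)‖ := by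
      refine Summable.of_nonneg_of_le (fun k => norm_nonneg _) (fun k => ?_)
        ((sum_h_shift m).mul_left ‖α‖)
      rw [norm_mul]
      exact mul_le_mul_of_nonneg_right (αbd k) (norm_nonneg _)
    have h1 : ‖∑' k : ℤ, α k * h ((r : ℤ) * m - k)‖
        ≤ ∑' k : ℤ, ‖α k‖ * ‖h ((r : ℤ) * m - k)‖ := by
      refine (norm_tsum_le_tsum_norm sprod).trans_eq (tsum_congr fun k => norm_mul _ _)
    have cs := tsum_cs (f := fun k : ℤ => ‖α k‖ * Real.sqrt ‖h ((r : ℤ) * m - k)‖)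
      (g := fun k : ℤ => Real.sqrt ‖h ((r : ℤ) * m - k)‖)
      (fun k => mul_nonneg (norm_nonneg _) (Real.sqrt_nonneg _))
      (fun k => Real.sqrt_nonneg _)
      (by simpa [mul_pow, Real.sq_sqrt, norm_nonneg] using sf2 m)
      (by simpa [Real.sq_sqrt, norm_nonneg] using sum_h_shift m)
    have e1 : (fun k : ℤ => (‖α k‖ * Real.sqrt ‖h ((r : ℤ) * m - k)‖) *
        Real.sqrt ‖h ((r : ℤ) * m - k)‖) = fun k : ℤ => ‖α k‖ * ‖h ((r : ℤ) * m - k)‖ := by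
      funext k; rw [mul_assoc, Real.mul_self_sqrt (norm_nonneg _)]
    have e2 : (fun k : ℤ => (‖α k‖ * Real.sqrt ‖h ((r : ℤ) * m - k)‖) ^ 2)
        = fun k : ℤ => ‖α k‖ ^ 2 * ‖h ((r : ℤ) * m - k)‖ := by
      funext k; rw [mul_pow, Real.sq_sqrt (norm_nonneg _)]
    have e3 : (fun k : ℤ => (Real.sqrt ‖h ((r : ℤ) * m - k)‖) ^ 2)
        = fun k : ℤ => ‖h ((r : ℤ) * m - k)‖ := by
      funext k; rw [Real.sq_sqrt (norm_nonneg _)]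
    rw [e1, e2, e3, tsum_h_shift m] at cs
    calc ‖∑' k : ℤ, α k * h ((r : ℤ) * m - k)‖ ^ 2
        ≤ (∑' k : ℤ, ‖α k‖ * ‖h ((r : ℤ) * m - k)‖) ^ 2 :=
          pow_le_pow_left₀ (norm_nonneg _) h1 2
      _ ≤ w m * Hh := cs
      _ = Hh * w m := mul_comm _ _
  have hF0 : (0 : ℤ × ℤ → ℝ) ≤ fun q : ℤ × ℤ => ‖α q.1‖ ^ 2 * ‖h ((r : ℤ) * q.2 - q.1)‖ :=
    Pi.le_def.mpr fun q => mul_nonneg (sq_nonneg _) (norm_nonneg _)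
  have SF : Summable fun q : ℤ × ℤ => ‖α q.1‖ ^ 2 * ‖h ((r : ℤ) * q.2 - q.1)‖ := by
    refine (summable_prod_of_nonneg hF0).2 ⟨fun k => ?_, ?_⟩
    · show Summable fun m : ℤ => ‖α k‖ ^ 2 * ‖h ((r : ℤ) * m - k)‖
      exact (hh.comp_injective (injm k)).mul_left _
    · show Summable fun k : ℤ => ∑' m : ℤ, ‖α k‖ ^ 2 * ‖h ((r : ℤ) * m - k)‖
      refine Summable.of_nonneg_of_le (fun k => tsum_nonneg fun m =>
        mul_nonneg (sq_nonneg _) (norm_nonneg _)) (fun k => ?_) (aα.mul_right Hh)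
      rw [tsum_mul_left]
      refine mul_le_mul_of_nonneg_left ?_ (sq_nonneg _)
      exact Summable.tsum_le_tsum_of_inj (fun m : ℤ => (r : ℤ) * m - k) (injm k)
        (fun c _ => norm_nonneg _) (fun m => le_rfl) (hh.comp_injective (injm k)) hh
  have Sw : Summable w := by
    have := ((summable_prod_of_nonneg
      (Pi.le_def.mpr fun q : ℤ × ℤ => Pi.le_def.mp hF0 q.swap)).1 SF.prod_symm).2
    simpa [hw] using this
  exact Summable.of_nonneg_of_le (fun m => sq_nonneg _) bound (Sw.mul_left Hh)

end Aux

/-- Suppose `𝐡_j, 𝐠_j ∈ ℓ¹(ℤ)` for `j = 1,…,s`.  The analysis–synthesis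
filter bank with downsampling `r` gives perfect reconstruction, i.e.
`αₙ = ∑_{j=1}^s ∑_{m∈ℤ} (α ∗ 𝐡_j)(rm) 𝐠_j(n − rm)` for all `α ∈ ℓ²(ℤ)` and `n ∈ ℤ`,
iff the sequences `{conj 𝐡_j(rm − ·)}` and `{𝐠_j(· − rm)}` form a pair of dual frames in
`ℓ²(ℤ)`, i.e. `α = ∑_{j,m} ⟨α, u_{j,m}⟩ v_{j,m}` for all `α ∈ ℓ²(ℤ)` (the paper's inner
product `⟨u,v⟩`, linear in the first slot, is Mathlib's `⟪v,u⟫_ℂ`). -/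
theorem stmt_8 (s : ℕ) (r : ℕ) (hr : 0 < r)
    (h g : Fin s → ℤ → ℂ)
    (hl1 : ∀ j, Summable fun n => ‖h j n‖) (gl1 : ∀ j, Summable fun n => ‖g j n‖)
    -- `u_{j,m} = conj 𝐡_j(rm − ·)` and `v_{j,m} = 𝐠_j(· − rm)` as elements of `ℓ²(ℤ)`
    (U V : Fin s → ℤ → lp (fun _ : ℤ => ℂ) 2)
    (hU : ∀ j m n, U j m n = conj (h j ((r : ℤ) * m - n)))
    (hV : ∀ j m n, V j m n = g j (n - (r : ℤ) * m)) :
    -- perfect reconstruction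
    (∀ (α : lp (fun _ : ℤ => ℂ) 2) (n : ℤ),
      HasSum (fun p : Fin s × ℤ =>
        (∑' k : ℤ, α k * h p.1 ((r : ℤ) * p.2 - k)) * g p.1 (n - (r : ℤ) * p.2)) (α n))
    ↔
    -- dual frames in `ℓ²(ℤ)`
    (∀ α : lp (fun _ : ℤ => ℂ) 2,
      HasSum (fun p : Fin s × ℤ => ⟪U p.1 p.2, α⟫ • V p.1 p.2) α) := by
    classical
  have key : ∀ (α : lp (fun _ : ℤ => ℂ) 2) (j : Fin s) (m : ℤ),
      ⟪U j m, α⟫ = ∑' k : ℤ, α k * h j ((r : ℤ) * m - k) := by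
    intro α j m
    rw [lp.inner_eq_tsum]
    refine tsum_congr fun k => ?_
    rw [RCLike.inner_apply, hU, Complex.conj_conj, mul_comm]
  constructor
  · -- perfect reconstruction → dual frames
    intro hp α
    -- summability of each branch of the synthesis sum
    have hsum : ∀ j : Fin s,
        Summable fun m : ℤ => (∑' k : ℤ, α k * h j ((r : ℤ) * m - k)) • V j m := by
      intro j
      rw [summable_iff_vanishing_norm]
      intro ε hε
      set Hg := ∑' n, ‖g j n‖ with hHg
      have hHg0 : 0 ≤ Hg := tsum_nonneg fun _ => norm_nonneg _
      have hc := anal_summable (hl1 j) hr α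
      obtain ⟨t0, ht0⟩ := summable_iff_vanishing_norm.1 hc ((ε / (Hg + 1)) ^ 2) (by positivity)
      refine ⟨t0, fun t ht => ?_⟩
      have hb := synth_bound (gl1 j) hr (fun m n => hV j m n)
        (fun m => ∑' k : ℤ, α k * h j ((r : ℤ) * m - k)) t
      have h2 := ht0 t ht
      rw [Real.norm_of_nonneg (Finset.sum_nonneg fun _ _ => sq_nonneg _)] at h2
      have hX0 : 0 ≤ ∑ m ∈ t, ‖∑' k : ℤ, α k * h j ((r : ℤ) * m - k)‖ ^ 2 :=
        Finset.sum_nonneg fun _ _ => sq_nonneg _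
      rw [← hHg] at hb
      have h3 : ‖∑ m ∈ t, (∑' k : ℤ, α k * h j ((r : ℤ) * m - k)) • V j m‖ ^ 2 < ε ^ 2 := by
        refine hb.trans_lt ?_
        have hd : (ε / (Hg + 1)) ^ 2 = ε ^ 2 / (Hg + 1) ^ 2 := div_pow ε (Hg + 1) 2
        rw [hd] at h2
        have hp1 : (0 : ℝ) < (Hg + 1) ^ 2 := by positivity
        calc Hg ^ 2 * ∑ m ∈ t, ‖∑' k : ℤ, α k * h j ((r : ℤ) * m - k)‖ ^ 2
            ≤ Hg ^ 2 * (ε ^ 2 / (Hg + 1) ^ 2) :=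
              mul_le_mul_of_nonneg_left h2.le (sq_nonneg _)
          _ = (Hg ^ 2 / (Hg + 1) ^ 2) * ε ^ 2 := by ring
          _ < 1 * ε ^ 2 := by
              refine mul_lt_mul_of_pos_right ?_ (by positivity)
              rw [div_lt_one hp1]
              nlinarith
          _ = ε ^ 2 := one_mul _
      exact lt_of_pow_lt_pow_left₀ 2 hε.le h3
    set β : Fin s → lp (fun _ : ℤ => ℂ) 2 :=
      fun j => ∑' m : ℤ, (∑' k : ℤ, α k * h j ((r : ℤ) * m - k)) • V j m with hβdef
    have hβ : ∀ j : Fin s,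
        HasSum (fun m : ℤ => (∑' k : ℤ, α k * h j ((r : ℤ) * m - k)) • V j m) (β j) :=
      fun j => (hsum j).hasSum
    -- glue the branches over `Fin s × ℤ`
    have hind : ∀ j : Fin s, HasSum (fun p : Fin s × ℤ =>
        if p.1 = j then (∑' k : ℤ, α k * h p.1 ((r : ℤ) * p.2 - k)) • V p.1 p.2 else 0)
        (β j) := by
      intro j
      have hinj : Function.Injective fun m : ℤ => ((j, m) : Fin s × ℤ) := fun a b hab => by
        simpa using congrArg Prod.snd hab
      rw [← hinj.hasSum_iff]
      · have ecomp : ((fun p : Fin s × ℤ =>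
            if p.1 = j then (∑' k : ℤ, α k * h p.1 ((r : ℤ) * p.2 - k)) • V p.1 p.2 else 0)
            ∘ fun m : ℤ => ((j, m) : Fin s × ℤ))
            = fun m : ℤ => (∑' k : ℤ, α k * h j ((r : ℤ) * m - k)) • V j m := by
          funext m
          simp [Function.comp]
        rw [ecomp]
        exact hβ j
      · rintro ⟨j', m⟩ hp'
        have hne : j' ≠ j := by
          intro e
          exact hp' ⟨m, by simp [e]⟩
        simp [hne]
    have hG : HasSum (fun p : Fin s × ℤ =>
        (∑' k : ℤ, α k * h p.1 ((r : ℤ) * p.2 - k)) • V p.1 p.2) (∑ j, β j) := by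
      have hs2 := hasSum_sum (s := Finset.univ)
        (f := fun (j : Fin s) (p : Fin s × ℤ) =>
          if p.1 = j then (∑' k : ℤ, α k * h p.1 ((r : ℤ) * p.2 - k)) • V p.1 p.2 else 0)
        (a := β) (fun j _ => hind j)
      have e : (fun p : Fin s × ℤ => ∑ j : Fin s,
          if p.1 = j then (∑' k : ℤ, α k * h p.1 ((r : ℤ) * p.2 - k)) • V p.1 p.2 else 0)
          = fun p : Fin s × ℤ =>
            (∑' k : ℤ, α k * h p.1 ((r : ℤ) * p.2 - k)) • V p.1 p.2 := by
        funext p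
        rw [Finset.sum_ite_eq]
        simp
      rwa [e] at hs2
    have hβα : (∑ j, β j) = α := by
      apply lp.ext
      funext n
      have h1 := lp2_eval_hasSum _ _ hG n
      have h2 := hp α n
      have e : (fun p : Fin s × ℤ =>
          (((∑' k : ℤ, α k * h p.1 ((r : ℤ) * p.2 - k)) • V p.1 p.2 :
            lp (fun _ : ℤ => ℂ) 2) n))
          = fun p : Fin s × ℤ =>
            (∑' k : ℤ, α k * h p.1 ((r : ℤ) * p.2 - k)) * g p.1 (n - (r : ℤ) * p.2) := by
        funext p
        rw [lp.coeFn_smul, Pi.smul_apply, smul_eq_mul, hV]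
      rw [e] at h1
      exact h1.unique h2
    have e2 : (fun p : Fin s × ℤ => ⟪U p.1 p.2, α⟫ • V p.1 p.2)
        = fun p : Fin s × ℤ =>
          (∑' k : ℤ, α k * h p.1 ((r : ℤ) * p.2 - k)) • V p.1 p.2 := by
      funext p
      rw [key]
    rw [e2]
    exact hβα ▸ hG
  · -- dual frames → perfect reconstruction
    intro hd α n
    have h1 := lp2_eval_hasSum _ _ (hd α) n
    have e : (fun p : Fin s × ℤ => ((⟪U p.1 p.2, α⟫ • V p.1 p.2 : lp (fun _ : ℤ => ℂ) 2) n))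
        = fun p : Fin s × ℤ =>
          (∑' k : ℤ, α k * h p.1 ((r : ℤ) * p.2 - k)) * g p.1 (n - (r : ℤ) * p.2) := by
      funext p
      rw [lp.coeFn_smul, Pi.smul_apply, smul_eq_mul, key, hV]
    rwa [e] at h1
end

section
/- Every x ∈ A_a can be recovered from its samples {L_j x(rn)}_{j=1..s, n=0..ℓ−1} (equivalently, the vectors {g_{j,n}} form a frame/spanning set for ℂ^N) if and only if rank R_{a,b} = N, where R_{a,b} is the sℓ×N matrix whose conjugate-transpose has columns g_{j,n}. In particular, this forces s ≥ r. -/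
open scoped ComplexInnerProductSpace ComplexConjugate

private lemma CLE.mul_apply {H : Type*} [NormedAddCommGroup H] [InnerProductSpace ℂ H]
    (f g : H ≃L[ℂ] H) (x : H) : (f * g) x = f (g x) := rfl

/-- In the cyclic case (`T^N a = a`, `{Tᵏa}_{k<N}` linearly
independent, `N = rℓ`), every `x ∈ 𝒜_a` can be recovered from its samples
`{𝓛_j x(rn)}_{j=1..s, n=0..ℓ−1}` — equivalently, the vectors `{g_{j,n}}` form a
spanning set (frame) of `ℂ^N` — iff `rank ℝ_{a,b} = N`, where `ℝ_{a,b}` is the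
`sℓ×N` matrix whose conjugate-transpose has columns `g_{j,n}`.  In particular this
forces `s ≥ r`.  (`r_{a,b_j}(k) = ⟨Tᵏ a, b_j⟩` is the paper's inner product, i.e.
Mathlib's `⟪b_j, Tᵏ a⟫_ℂ`; `S` denotes the adjoint `T*`.) -/
theorem stmt_11 {H : Type*} [NormedAddCommGroup H] [InnerProductSpace ℂ H] [CompleteSpace H]
    (T S : H ≃L[ℂ] H)
    (hS : ∀ x y : H, ⟪T x, y⟫ = ⟪x, S y⟫)
    (N r ℓ s : ℕ) (hN : 0 < N) (hr : 0 < r) (hs : 0 < s) (hrl : N = r * ℓ)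
    (a : H) (b : Fin s → H)
    (hTN : (T ^ N) a = a)
    (hind : LinearIndependent ℂ fun k : Fin N => (T ^ (k : ℕ)) a) :
    let rab : Fin s → ℤ → ℂ := fun j k => ⟪b j, (T ^ k) a⟫
    let R : Matrix (Fin s × Fin ℓ) (Fin N) ℂ :=
      Matrix.of fun p k => rab p.1 ((N : ℤ) + (k : ℤ) - (r : ℤ) * (p.2 : ℤ))
    let gvec : Fin s × Fin ℓ → EuclideanSpace ℂ (Fin N) :=
      fun p => WithLp.toLp 2 (fun k => conj (R p k))
    let Aa := Submodule.span ℂ (Set.range fun k : Fin N => (T ^ (k : ℕ)) a)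
    let L : H → Fin s × Fin ℓ → ℂ :=
      fun x p => ⟪(S ^ (-((r : ℤ) * (p.2 : ℤ)))) (b p.1), x⟫
    ((∀ x ∈ Aa, ∀ y ∈ Aa, (∀ p, L x p = L y p) → x = y) ↔ R.rank = N) ∧
    ((Submodule.span ℂ (Set.range gvec) = ⊤) ↔ R.rank = N) ∧
    (R.rank = N → r ≤ s) := by
  intro rab R gvec Aa L
  -- adjoint relation for integer powers
  have key : ∀ (m : ℤ) (x y : H), ⟪(T ^ m) x, y⟫ = ⟪x, (S ^ m) y⟫ := by
    intro m
    induction m using Int.induction_on with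
    | zero => exact fun x y => rfl
    | succ n ih =>
      intro x y
      have h1 : (T ^ ((n : ℤ) + 1)) x = (T ^ (n : ℤ)) (T x) := by
        rw [zpow_add, zpow_one, CLE.mul_apply]
      have h2 : (S ^ ((n : ℤ) + 1)) y = S ((S ^ (n : ℤ)) y) := by
        rw [add_comm, zpow_add, zpow_one, CLE.mul_apply]
      rw [h1, h2, ih, ← hS]
    | pred n ih =>
      intro x y
      have h1 : (T ^ ((-n : ℤ) - 1)) x = (T ^ (-n : ℤ)) (T⁻¹ x) := by
        rw [sub_eq_add_neg, zpow_add, zpow_neg_one, CLE.mul_apply]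
      have h2 : (S ^ ((-n : ℤ) - 1)) y = S⁻¹ ((S ^ (-n : ℤ)) y) := by
        rw [sub_eq_add_neg, add_comm, zpow_add, zpow_neg_one, CLE.mul_apply]
      have h3 : ∀ u v : H, ⟪T⁻¹ u, v⟫ = ⟪u, S⁻¹ v⟫ := by
        intro u v
        have hc1 : T (T⁻¹ u) = u := T.apply_symm_apply u
        have hc2 : S (S⁻¹ v) = v := S.apply_symm_apply v
        have := hS (T⁻¹ u) (S⁻¹ v)
        rw [hc1, hc2] at this
        exact this.symm
      rw [h1, h2, ih, ← h3]
  have key' : ∀ (m : ℤ) (x y : H), ⟪(S ^ m) y, x⟫ = ⟪y, (T ^ m) x⟫ := by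
    intro m x y
    have := congrArg conj (key m x y)
    rw [inner_conj_symm, inner_conj_symm] at this
    exact this.symm
  -- periodicity
  have per : ∀ m : ℤ, (T ^ (m + (N : ℤ))) a = (T ^ m) a := by
    intro m
    rw [zpow_add, CLE.mul_apply, zpow_natCast, hTN]
  -- R entries as inner products
  have hR : ∀ (p : Fin s × Fin ℓ) (k : Fin N),
      R p k = ⟪b p.1, (T ^ ((k : ℤ) - (r : ℤ) * (p.2 : ℤ))) a⟫ := by
    intro p k
    show rab p.1 ((N : ℤ) + (k : ℤ) - (r : ℤ) * (p.2 : ℤ)) = _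
    have : (N : ℤ) + (k : ℤ) - (r : ℤ) * (p.2 : ℤ)
        = ((k : ℤ) - (r : ℤ) * (p.2 : ℤ)) + (N : ℤ) := by ring
    simp only [rab, this, per]
  -- samples of basis vectors
  have hg : ∀ (p : Fin s × Fin ℓ) (k : Fin N),
      L ((T ^ (k : ℕ)) a) p = R p k := by
    intro p k
    show ⟪(S ^ (-((r : ℤ) * (p.2 : ℤ)))) (b p.1), (T ^ (k : ℕ)) a⟫ = R p k
    rw [key', hR]
    congr 1
    rw [← zpow_natCast T (k : ℕ), ← CLE.mul_apply, ← zpow_add]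
    congr 1
    ring
  -- the synthesis map
  set e : (Fin N → ℂ) → H := fun α => ∑ k : Fin N, α k • (T ^ (k : ℕ)) a with he
  have hLe : ∀ (α : Fin N → ℂ) (p), L (e α) p = R.mulVec α p := by
    intro α p
    show ⟪(S ^ (-((r : ℤ) * (p.2 : ℤ)))) (b p.1), ∑ k : Fin N, α k • (T ^ (k : ℕ)) a⟫ = _
    rw [inner_sum]
    simp only [inner_smul_right]
    rw [Matrix.mulVec, dotProduct]
    refine Finset.sum_congr rfl fun k _ => ?_
    rw [← hg p k]
    show α k * L ((T ^ (k : ℕ)) a) p = _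
    ring
  have heInj : ∀ α : Fin N → ℂ, e α = 0 → α = 0 := by
    intro α hα
    funext k
    exact Fintype.linearIndependent_iff.mp hind α hα k
  have heMem : ∀ α : Fin N → ℂ, e α ∈ Aa := by
    intro α
    exact Submodule.sum_smul_mem _ _ fun k _ =>
      Submodule.subset_span (Set.mem_range_self k)
  -- rank characterization
  have hrank : R.rank = N ↔ ∀ α : Fin N → ℂ, R.mulVec α = 0 → α = 0 := by
    have h1 := LinearMap.finrank_range_add_finrank_ker R.mulVecLin
    rw [Module.finrank_fintype_fun_eq_card, Fintype.card_fin] at h1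
    constructor
    · intro h α hα
      have hk : Module.finrank ℂ (LinearMap.ker R.mulVecLin) = 0 := by
        have : R.rank = Module.finrank ℂ (LinearMap.range R.mulVecLin) := rfl
        omega
      rw [Submodule.finrank_eq_zero] at hk
      have : α ∈ LinearMap.ker R.mulVecLin := by
        rw [LinearMap.mem_ker, Matrix.mulVecLin_apply, hα]
      rw [hk] at this
      simpa using this
    · intro h
      have hk : LinearMap.ker R.mulVecLin = ⊥ := by
        rw [LinearMap.ker_eq_bot']
        intro α hα
        exact h α (by rwa [Matrix.mulVecLin_apply] at hα)
      rw [hk] at h1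
      have : R.rank = Module.finrank ℂ (LinearMap.range R.mulVecLin) := rfl
      simp only [finrank_bot] at h1
      omega
  refine ⟨?_, ?_, ?_⟩
  · -- part 1
    rw [hrank]
    constructor
    · intro hinj α hα
      apply heInj
      refine hinj _ (heMem α) 0 (Submodule.zero_mem _) fun p => ?_
      rw [hLe, hα]
      simp only [Pi.zero_apply]
      show (0 : ℂ) = ⟪_, (0 : H)⟫
      rw [inner_zero_right]
    · intro h x hx y hy hxy
      obtain ⟨α, hα⟩ := Submodule.mem_span_range_iff_exists_fun ℂ |>.mp hx
      obtain ⟨β, hβ⟩ := Submodule.mem_span_range_iff_exists_fun ℂ |>.mp hy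
      have hαβ : R.mulVec (α - β) = 0 := by
        funext p
        rw [Matrix.mulVec_sub]
        have h1 : L (e α) p = L (e β) p := by rw [he]; simp only [e, hα, hβ]; exact hxy p
        rw [hLe, hLe] at h1
        simp [h1]
      have := h _ hαβ
      have hαβ' : α = β := by
        funext k; have := congrFun this k; simpa [sub_eq_zero] using this
      rw [← hα, ← hβ, hαβ']
  · -- part 2
    rw [hrank]
    have hinner : ∀ (p) (v : EuclideanSpace ℂ (Fin N)), ⟪gvec p, v⟫ = R.mulVec v p := by
      intro p v
      rw [PiLp.inner_apply, Matrix.mulVec, dotProduct]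
      refine Finset.sum_congr rfl fun k _ => ?_
      simp [gvec, mul_comm]
    constructor
    · intro hspan α hα
      set v : EuclideanSpace ℂ (Fin N) := WithLp.toLp 2 α with hv
      have hvo : v ∈ (Submodule.span ℂ (Set.range gvec))ᗮ := by
        rw [Submodule.mem_orthogonal]
        intro u hu
        induction hu using Submodule.span_induction with
        | mem u hu =>
          obtain ⟨p, rfl⟩ := hu
          rw [hinner]
          exact congrFun hα p
        | zero => simp
        | add _ _ _ _ h1 h2 => rw [inner_add_left, h1, h2, add_zero]
        | smul c u _ h1 => rw [inner_smul_left, h1, mul_zero]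
      rw [hspan, Submodule.top_orthogonal_eq_bot] at hvo
      simpa [hv] using hvo
    · intro h
      rw [← Submodule.orthogonal_eq_bot_iff]
      rw [Submodule.eq_bot_iff]
      intro v hv
      have : R.mulVec v = 0 := by
        funext p
        rw [← hinner]
        exact (Submodule.mem_orthogonal _ _).mp hv _
          (Submodule.subset_span (Set.mem_range_self p))
      have := h v this
      simpa using this
  · -- part 3
    intro h
    have hl : 0 < ℓ := by
      rcases Nat.eq_zero_or_pos ℓ with h0 | h0
      · rw [h0, mul_zero] at hrl; omega
      · exact h0
    have := R.rank_le_card_height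
    rw [h, Fintype.card_prod, Fintype.card_fin, Fintype.card_fin] at this
    rw [hrl] at this
    exact Nat.le_of_mul_le_mul_right this hl
end

section
/- Let C be an sℓ×N complex matrix partitioned into s blocks of size ℓ×N, with N = rℓ. Each block of C is r-circulant (each row equals the previous row shifted r places to the right with wraparound) if and only if C = P* C P_N^r, where P_N is the N×N cyclic 1-shift matrix and P = diag(P_ℓ,...,P_ℓ) (s copies). Consequently, if C has this structure then so does (C†)ᵀ, where C† is the Moore–Penrose pseudo-inverse of C. -/
open Matrix

/-- `B` is the Moore–Penrose pseudo-inverse of `A` (the four Penrose equations). -/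
def IsMoorePenrose {m n : Type*} [Fintype m] [Fintype n]
    (A : Matrix m n ℂ) (B : Matrix n m ℂ) : Prop :=
  A * B * A = A ∧ B * A * B = B ∧ (A * B)ᴴ = A * B ∧ (B * A)ᴴ = B * A

/-- Uniqueness of the Moore–Penrose pseudo-inverse. -/
lemma mp_unique {m n : Type*} [Fintype m] [Fintype n]
    (A : Matrix m n ℂ) (B1 B2 : Matrix n m ℂ)
    (h1 : IsMoorePenrose A B1) (h2 : IsMoorePenrose A B2) : B1 = B2 := by
  obtain ⟨a1, b1, c1, d1⟩ := h1
  obtain ⟨a2, b2, c2, d2⟩ := h2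
  have hAB : A * B1 = A * B2 := by
    calc A * B1 = (A * B1)ᴴ := c1.symm
      _ = B1ᴴ * Aᴴ := by rw [conjTranspose_mul]
      _ = B1ᴴ * (A * B2 * A)ᴴ := by rw [a2]
      _ = (B1ᴴ * Aᴴ) * (A * B2) := by
            rw [conjTranspose_mul (A * B2) A, c2, Matrix.mul_assoc]
      _ = (A * B1)ᴴ * (A * B2) := by rw [conjTranspose_mul]
      _ = (A * B1 * A) * B2 := by
            rw [c1, Matrix.mul_assoc (A * B1) A B2]
      _ = A * B2 := by rw [a1]
  have hBA : B1 * A = B2 * A := by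
    calc B1 * A = (B1 * A)ᴴ := d1.symm
      _ = Aᴴ * B1ᴴ := by rw [conjTranspose_mul]
      _ = (A * B2 * A)ᴴ * B1ᴴ := by rw [a2]
      _ = (B2 * A) * (B1 * A)ᴴ := by
            rw [conjTranspose_mul (A * B2) A, conjTranspose_mul A B2, ← d2,
              conjTranspose_mul B2 A, conjTranspose_mul B1 A]
            simp only [Matrix.mul_assoc]
      _ = (B2 * A) * (B1 * A) := by rw [d1]
      _ = B2 * (A * B1 * A) := by rw [Matrix.mul_assoc, Matrix.mul_assoc]
      _ = B2 * A := by rw [a1]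
  calc B1 = B1 * A * B1 := b1.symm
    _ = B1 * (A * B2) := by rw [Matrix.mul_assoc, hAB]
    _ = (B2 * A) * B2 := by rw [← Matrix.mul_assoc, hBA]
    _ = B2 := b2

/-- If `A = Uᴴ A V` with `U Uᴴ = 1`, `V Vᴴ = 1`, and `B` is the MP inverse of `A`,
then so is `Vᴴ B U`. -/
lemma mp_conj {m n : Type*} [Fintype m] [Fintype n] [DecidableEq m] [DecidableEq n]
    (A : Matrix m n ℂ) (B : Matrix n m ℂ) (U : Matrix m m ℂ) (V : Matrix n n ℂ)
    (hU2 : U * Uᴴ = 1) (hV2 : V * Vᴴ = 1)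
    (hA : A = Uᴴ * A * V) (hB : IsMoorePenrose A B) :
    IsMoorePenrose A (Vᴴ * B * U) := by
  obtain ⟨e1, e2, e3, e4⟩ := hB
  have hA2 : U * A = A * V := by
    conv_lhs => rw [hA]
    rw [← Matrix.mul_assoc U (Uᴴ * A) V, ← Matrix.mul_assoc U Uᴴ A, hU2, Matrix.one_mul]
  have hA3 : A * Vᴴ = Uᴴ * A := by
    conv_lhs => rw [hA]
    rw [Matrix.mul_assoc (Uᴴ * A) V Vᴴ, hV2, Matrix.mul_one]
  have hCB' : A * (Vᴴ * B * U) = Uᴴ * (A * B) * U := by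
    rw [← Matrix.mul_assoc A (Vᴴ * B) U, ← Matrix.mul_assoc A Vᴴ B, hA3, Matrix.mul_assoc Uᴴ A B]
  have hB'C : (Vᴴ * B * U) * A = Vᴴ * (B * A) * V := by
    rw [Matrix.mul_assoc (Vᴴ * B) U A, hA2, ← Matrix.mul_assoc (Vᴴ * B) A V, Matrix.mul_assoc Vᴴ B A]
  refine ⟨?_, ?_, ?_, ?_⟩
  · rw [hCB', Matrix.mul_assoc (Uᴴ * (A * B)) U A, hA2, ← Matrix.mul_assoc (Uᴴ * (A * B)) A V,
      Matrix.mul_assoc Uᴴ (A * B) A, e1]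
    exact hA.symm
  · rw [hB'C, Matrix.mul_assoc (Vᴴ * (B * A)) V (Vᴴ * B * U), ← Matrix.mul_assoc V (Vᴴ * B) U,
      ← Matrix.mul_assoc V Vᴴ B, hV2, Matrix.one_mul, ← Matrix.mul_assoc (Vᴴ * (B * A)) B U,
      Matrix.mul_assoc Vᴴ (B * A) B, e2]
  · rw [hCB', conjTranspose_mul, conjTranspose_mul, conjTranspose_conjTranspose, e3,
      ← Matrix.mul_assoc Uᴴ (A * B) U]
  · rw [hB'C, conjTranspose_mul, conjTranspose_mul, conjTranspose_conjTranspose, e4,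
      ← Matrix.mul_assoc Vᴴ (B * A) V]

lemma pn_pow (N : ℕ) [NeZero N] (r : ℕ) :
    (Matrix.of fun i j : ZMod N => if j = i + 1 then (1 : ℂ) else 0) ^ r
      = Matrix.of fun i j => if j = i + (r : ZMod N) then 1 else 0 := by
  induction r with
  | zero =>
    ext i j
    simp [Matrix.one_apply, eq_comm]
  | succ r ih =>
    rw [pow_succ, ih]
    ext i j
    simp only [Matrix.mul_apply, Matrix.of_apply, ite_mul, one_mul, zero_mul]
    rw [Finset.sum_ite_eq' Finset.univ (i + (r : ZMod N))
      (fun m => if j = m + 1 then (1 : ℂ) else 0)]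
    simp only [Finset.mem_univ, if_true]
    push_cast
    rw [add_assoc]

set_option maxHeartbeats 1000000 in
/-- Let `C` be an `sℓ×N` complex matrix (with `N = rℓ`) partitioned
into `s` blocks of size `ℓ×N`.  Each block is `r`-circulant (each row equals the
previous row shifted `r` places to the right with wraparound) iff `C = ℙ* C P_N^r`,
where `P_N` is the `N×N` cyclic `1`-shift matrix (first row `(0,1,0,…,0)`) and
`ℙ = diag(P_ℓ,…,P_ℓ)` (`s` copies).  Consequently, if `C` has this structure then so
do `(C†)ᵀ` and `(C†)*`, where `C†` is the Moore–Penrose pseudo-inverse of `C`.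
Row/column indices are taken in `ZMod ℓ` and `ZMod N` to encode the wraparound. -/
theorem stmt_12 (s r ℓ N : ℕ) [NeZero ℓ] [NeZero N] (hN : N = r * ℓ)
    (C : Matrix (Fin s × ZMod ℓ) (ZMod N) ℂ) :
    let PN : Matrix (ZMod N) (ZMod N) ℂ := Matrix.of fun i j => if j = i + 1 then 1 else 0
    let P : Matrix (Fin s × ZMod ℓ) (Fin s × ZMod ℓ) ℂ :=
      Matrix.of fun p q => if p.1 = q.1 ∧ q.2 = p.2 + 1 then 1 else 0
    ((∀ (j : Fin s) (n : ZMod ℓ) (k : ZMod N), C (j, n + 1) (k + (r : ZMod N)) = C (j, n) k)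
        ↔ C = Pᴴ * C * PN ^ r) ∧
    (C = Pᴴ * C * PN ^ r →
      ∀ B : Matrix (ZMod N) (Fin s × ZMod ℓ) ℂ, IsMoorePenrose C B →
        Bᵀ = Pᴴ * Bᵀ * PN ^ r ∧ Bᴴ = Pᴴ * Bᴴ * PN ^ r) := by
  intro PN P
  have hPNdef : PN = Matrix.of fun i j : ZMod N => if j = i + 1 then (1 : ℂ) else 0 := rfl
  have hPdef : P = Matrix.of fun p q : Fin s × ZMod ℓ =>
      if p.1 = q.1 ∧ q.2 = p.2 + 1 then (1 : ℂ) else 0 := rfl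
  have hQ : PN ^ r = Matrix.of fun i j => if j = i + (r : ZMod N) then (1 : ℂ) else 0 := by
    rw [hPNdef]; exact pn_pow N r
  have key : ∀ (D : Matrix (Fin s × ZMod ℓ) (ZMod N) ℂ) (j : Fin s) (n : ZMod ℓ) (k : ZMod N),
      (Pᴴ * D * PN ^ r) (j, n) k = D (j, n - 1) (k - (r : ZMod N)) := by
    intro D j n k
    rw [hQ]
    have h1 : ∀ k', (Pᴴ * D) (j, n) k' = D (j, n - 1) k' := by
      intro k'
      simp only [Matrix.mul_apply, Matrix.conjTranspose_apply, hPdef, Matrix.of_apply]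
      rw [Finset.sum_eq_single (⟨j, n - 1⟩ : Fin s × ZMod ℓ)]
      · simp
      · intro q _ hq
        have hnq : ¬ (q.1 = j ∧ n = q.2 + 1) := by
          rintro ⟨hq1, hq2⟩
          apply hq
          have : q.2 = n - 1 := by rw [hq2]; ring
          rw [← hq1, ← this]
        simp [hnq]
      · simp
    simp only [Matrix.mul_apply, Matrix.of_apply, h1, mul_ite, mul_one, mul_zero]
    rw [Finset.sum_eq_single (k - (r : ZMod N))]
    · simp
    · intro m _ hm
      have : ¬ k = m + (r : ZMod N) := fun h => hm (by rw [h]; ring)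
      simp [this]
    · simp
  have main_iff : (∀ (j : Fin s) (n : ZMod ℓ) (k : ZMod N),
      C (j, n + 1) (k + (r : ZMod N)) = C (j, n) k) ↔ C = Pᴴ * C * PN ^ r := by
    constructor
    · intro h
      ext ⟨j, n⟩ k
      rw [key C j n k]
      have := h j (n - 1) (k - (r : ZMod N))
      simpa using this
    · intro h j n k
      have h2 := congrFun (congrFun h (j, n + 1)) (k + (r : ZMod N))
      rw [key C j (n + 1) (k + (r : ZMod N))] at h2
      simpa using h2
  refine ⟨main_iff, ?_⟩
  intro hC B hB
  have hPN1 : PNᴴ * PN = 1 := by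
    ext i j
    simp only [Matrix.mul_apply, Matrix.conjTranspose_apply, hPNdef, Matrix.of_apply,
      Matrix.one_apply]
    rw [Finset.sum_eq_single (i - 1)]
    · by_cases h : i = j
      · subst h; simp [sub_add_cancel]
      · have h2 : ¬ j = i - 1 + 1 := by
          rw [sub_add_cancel]; exact fun hh => h hh.symm
        have h3 : ¬ j = i := fun hh => h hh.symm
        simp [h2, h3, h]
    · intro m _ hm
      have : ¬ i = m + 1 := fun h => hm (by rw [h]; ring)
      simp [this]
    · simp
  have hPN2 : PN * PNᴴ = 1 := by
    ext i j
    simp only [Matrix.mul_apply, Matrix.conjTranspose_apply, hPNdef, Matrix.of_apply,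
      Matrix.one_apply]
    rw [Finset.sum_eq_single (i + 1)]
    · by_cases h : i = j
      · subst h; simp
      · have h2 : ¬ i + 1 = j + 1 := fun hh => h (add_right_cancel hh)
        simp [h, h2]
    · intro m _ hm
      simp [hm]
    · simp
  have hP2 : P * Pᴴ = 1 := by
    ext p q
    simp only [Matrix.mul_apply, Matrix.conjTranspose_apply, hPdef, Matrix.of_apply,
      Matrix.one_apply]
    rw [Finset.sum_eq_single (⟨p.1, p.2 + 1⟩ : Fin s × ZMod ℓ)]
    · by_cases h : p = q
      · subst h; simp
      · have h2 : ¬ (q.1 = p.1 ∧ p.2 + 1 = q.2 + 1) := by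
          rintro ⟨hh1, hh2⟩
          exact h (Prod.ext hh1.symm (add_right_cancel hh2))
        simp [h, h2]
        intro hh1 hh2
        exact h (Prod.ext hh1.symm hh2)
    · intro m _ hm
      have : ¬ (p.1 = m.1 ∧ m.2 = p.2 + 1) := by
        rintro ⟨hh1, hh2⟩
        exact hm (Prod.ext hh1.symm hh2)
      simp [this]
    · simp
  have hQ2 : PN ^ r * (PN ^ r)ᴴ = 1 := by
    have hu : PN ∈ unitary (Matrix (ZMod N) (ZMod N) ℂ) := ⟨hPN1, hPN2⟩
    exact (pow_mem hu r).2
  have hBeq : B = (PN ^ r)ᴴ * B * P :=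
    mp_unique C B ((PN ^ r)ᴴ * B * P) hB (mp_conj C B P (PN ^ r) hP2 hQ2 hC hB)
  have hPt : Pᵀ = Pᴴ := by
    ext p q
    simp only [Matrix.transpose_apply, Matrix.conjTranspose_apply, hPdef, Matrix.of_apply]
    split_ifs <;> simp
  have hQt : ((PN ^ r)ᴴ)ᵀ = PN ^ r := by
    ext i j
    simp only [Matrix.transpose_apply, Matrix.conjTranspose_apply, hQ, Matrix.of_apply]
    split_ifs <;> simp
  constructor
  · conv_lhs => rw [hBeq]
    rw [transpose_mul, transpose_mul, hPt, hQt, ← Matrix.mul_assoc]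
  · conv_lhs => rw [hBeq]
    rw [conjTranspose_mul, conjTranspose_mul, conjTranspose_conjTranspose, ← Matrix.mul_assoc]
end

section
/- In the critical case s = r (so sℓ = N), if the N×N matrix R_{a,b} is invertible then there exist unique c_j ∈ A_a, j=1,...,r, such that {T^{rn} c_j}_{j=1..r, n=0..ℓ−1} is a basis for A_a, the sampling expansion x = Σ_j Σ_n L_j x(rn) T^{rn} c_j holds for all x ∈ A_a, and the interpolation property L_{j'} c_j(rn) = δ_{j,j'} δ_{n,0} holds for all n = 0,...,ℓ−1 and j, j' = 1,...,r. -/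
open scoped ComplexInnerProductSpace ComplexConjugate

section Aux

variable {H : Type*} [NormedAddCommGroup H] [InnerProductSpace ℂ H]

private lemma aux_fix (U : H ≃L[ℂ] H) {x : H} (hx : U x = x) : ∀ q : ℤ, (U ^ q) x = x := by
  have hinv : U⁻¹ x = x := by
    have h : U⁻¹ (U x) = x := U.symm_apply_apply x
    rwa [hx] at h
  intro q
  induction q using Int.induction_on with
  | zero => rfl
  | succ n ih =>
    have h : (U ^ ((n : ℤ) + 1)) x = (U ^ (n : ℤ)) (U x) := by rw [zpow_add_one]; rfl
    rw [h, hx, ih]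
  | pred n ih =>
    have h : (U ^ (-(n : ℤ) - 1)) x = (U ^ (-(n : ℤ))) (U⁻¹ x) := by rw [zpow_sub_one]; rfl
    rw [h, hinv, ih]

private lemma aux_shift (T : H ≃L[ℂ] H) {n : ℕ} {x : H} (hx : (T ^ ((n : ℕ) : ℤ)) x = x)
    (m q : ℤ) : (T ^ (m + (n : ℤ) * q)) x = (T ^ m) x := by
  have h1 : (T ^ (m + (n : ℤ) * q)) x = (T ^ m) ((T ^ ((n : ℤ) * q)) x) := by
    rw [zpow_add]; rfl
  rw [h1, zpow_mul, aux_fix (T ^ (n : ℤ)) hx q]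

private lemma aux_adj (T S : H ≃L[ℂ] H) (hS : ∀ x y : H, ⟪T x, y⟫ = ⟪x, S y⟫) :
    ∀ (m : ℤ) (x y : H), ⟪(T ^ m) x, y⟫ = ⟪x, (S ^ m) y⟫ := by
  have hnat : ∀ (n : ℕ) (x y : H), ⟪(T ^ n) x, y⟫ = ⟪x, (S ^ n) y⟫ := by
    intro n
    induction n with
    | zero => intro x y; rfl
    | succ n ih =>
      intro x y
      have h1 : (T ^ (n + 1)) x = (T ^ n) (T x) := by rw [pow_succ]; rfl
      have h2 : (S ^ (n + 1)) y = S ((S ^ n) y) := by rw [pow_succ']; rfl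
      rw [h1, h2, ih (T x) y]
      exact hS x _
  intro m x y
  cases m with
  | ofNat n =>
    show ⟪(T ^ ((n : ℕ) : ℤ)) x, y⟫ = ⟪x, (S ^ ((n : ℕ) : ℤ)) y⟫
    rw [zpow_natCast, zpow_natCast]
    exact hnat n x y
  | negSucc n =>
    rw [zpow_negSucc, zpow_negSucc]
    have h := hnat (n + 1) ((T ^ (n + 1))⁻¹ x) ((S ^ (n + 1))⁻¹ y)
    have e1 : (T ^ (n + 1)) ((T ^ (n + 1))⁻¹ x) = x := (T ^ (n + 1)).apply_symm_apply x
    have e2 : (S ^ (n + 1)) ((S ^ (n + 1))⁻¹ y) = y := (S ^ (n + 1)).apply_symm_apply y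
    rw [e1, e2] at h
    exact h.symm

end Aux

/-- Critical case `s = r` (so `sℓ = N`) of the cyclic
single-generator setting: if the `N×N` matrix `ℝ_{a,b}` is invertible then there exist
unique `c_j ∈ 𝒜_a`, `j = 1,…,r`, such that `{T^{rn} c_j}_{j=1..r, n=0..ℓ−1}` is a basis
of `𝒜_a`, the sampling expansion `x = ∑_j ∑_n 𝓛_j x(rn) T^{rn} c_j` holds on `𝒜_a`,
and the interpolation property `𝓛_{j'} c_j(rn) = δ_{j,j'} δ_{n,0}` holds.
(The paper's inner product `⟨u,v⟩`, linear in the first slot, is Mathlib's `⟪v,u⟫_ℂ`;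
`S` denotes the adjoint `T*`.) -/
theorem stmt_15 {H : Type*} [NormedAddCommGroup H] [InnerProductSpace ℂ H] [CompleteSpace H]
    (T S : H ≃L[ℂ] H)
    (hS : ∀ x y : H, ⟪T x, y⟫ = ⟪x, S y⟫)
    (N r ℓ : ℕ) (hN : 0 < N) (hr : 0 < r) (hl : 0 < ℓ) (hrl : N = r * ℓ)
    (a : H) (b : Fin r → H)
    (hTN : (T ^ N) a = a)
    (hind : LinearIndependent ℂ fun k : Fin N => (T ^ (k : ℕ)) a) :
    let rab : Fin r → ℤ → ℂ := fun j k => ⟪b j, (T ^ k) a⟫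
    let R : Matrix (Fin r × Fin ℓ) (Fin N) ℂ :=
      Matrix.of fun p k => rab p.1 ((N : ℤ) + (k : ℤ) - (r : ℤ) * (p.2 : ℤ))
    let Aa := Submodule.span ℂ (Set.range fun k : Fin N => (T ^ (k : ℕ)) a)
    let L : H → Fin r → Fin ℓ → ℂ :=
      fun x j n => ⟪(S ^ (-((r : ℤ) * (n : ℤ)))) (b j), x⟫
    -- `P c`: the `c_j` lie in `𝒜_a`, `{T^{rn} c_j}` is a basis of `𝒜_a`,
    -- and the sampling expansion holds
    let P : (Fin r → H) → Prop := fun c =>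
      (∀ j, c j ∈ Aa) ∧
      LinearIndependent ℂ
        (fun p : Fin r × Fin ℓ => (T ^ ((r : ℤ) * (p.2 : ℤ))) (c p.1)) ∧
      Submodule.span ℂ
        (Set.range fun p : Fin r × Fin ℓ => (T ^ ((r : ℤ) * (p.2 : ℤ))) (c p.1)) = Aa ∧
      ∀ x ∈ Aa, x = ∑ j : Fin r, ∑ n : Fin ℓ, L x j n • (T ^ ((r : ℤ) * (n : ℤ))) (c j)
    -- if `ℝ_{a,b}` is invertible ...
    (∃ Q : Matrix (Fin N) (Fin r × Fin ℓ) ℂ, R * Q = 1 ∧ Q * R = 1) →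
      ∃ c : Fin r → H, P c ∧ (∀ c', P c' → c' = c) ∧
        ∀ (j j' : Fin r) (n : Fin ℓ),
          L (c j) j' n = if j = j' ∧ n = ⟨0, hl⟩ then 1 else 0 := by
  intro rab R Aa L P hQex
  obtain ⟨Q, hRQ, hQR⟩ := hQex
  have hadj := aux_adj T S hS
  -- basic facts
  have hNz : ((N : ℕ) : ℤ) = (r : ℤ) * (ℓ : ℤ) := by exact_mod_cast hrl
  have hTNz : (T ^ ((N : ℕ) : ℤ)) a = a := by rw [zpow_natCast]; exact hTN
  have hkeyL : ∀ (x : H) (j : Fin r) (n : Fin ℓ),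
      L x j n = ⟪b j, (T ^ (-((r : ℤ) * (n : ℤ)))) x⟫ := by
    intro x j n
    show ⟪(S ^ (-((r : ℤ) * (n : ℤ)))) (b j), x⟫ = _
    rw [← inner_conj_symm, ← hadj, inner_conj_symm]
  have hRdef : ∀ (p : Fin r × Fin ℓ) (k : Fin N),
      R p k = ⟪b p.1, (T ^ ((N : ℤ) + (k : ℤ) - (r : ℤ) * (p.2 : ℤ))) a⟫ := fun p k => rfl
  -- periodicity of `m ↦ T^m a`
  have hza : ∀ m : ℤ, (T ^ m) a = (T ^ (m % (N : ℤ))) a := by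
    intro m
    conv_lhs => rw [show m = m % (N : ℤ) + (N : ℤ) * (m / (N : ℤ)) from
      (Int.emod_add_mul_ediv m (N : ℤ)).symm]
    exact aux_shift T hTNz _ _
  have hmema : ∀ m : ℤ, (T ^ m) a ∈ Aa := by
    intro m
    rw [hza m]
    have h0 : 0 ≤ m % (N : ℤ) := Int.emod_nonneg m (by exact_mod_cast hN.ne')
    have h1 : m % (N : ℤ) < (N : ℤ) := Int.emod_lt_of_pos m (by exact_mod_cast hN)
    have h2 : (m % (N : ℤ)).toNat < N := by omega
    have h3 : m % (N : ℤ) = (((m % (N : ℤ)).toNat : ℕ) : ℤ) := by omega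
    rw [h3, zpow_natCast]
    exact Submodule.subset_span ⟨⟨(m % (N : ℤ)).toNat, h2⟩, rfl⟩
  -- T^N fixes Aa pointwise, T^m maps Aa into Aa
  have hAafix : ∀ x ∈ Aa, (T ^ ((N : ℕ) : ℤ)) x = x := by
    intro x hx
    obtain ⟨v, hv⟩ := (Submodule.mem_span_range_iff_exists_fun ℂ).mp hx
    rw [← hv, map_sum]
    refine Finset.sum_congr rfl fun k _ => ?_
    rw [map_smul]
    congr 1
    rw [← zpow_natCast T (k : ℕ)]
    have h1 : (T ^ ((N : ℕ) : ℤ)) ((T ^ (((k : ℕ) : ℕ) : ℤ)) a)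
        = (T ^ (((N : ℕ) : ℤ) + ((k : ℕ) : ℤ))) a := by rw [zpow_add]; rfl
    rw [h1, show ((N : ℕ) : ℤ) + ((k : ℕ) : ℤ) = ((k : ℕ) : ℤ) + ((N : ℕ) : ℤ) * 1 by ring,
      aux_shift T hTNz]
  have hmapAa : ∀ (m : ℤ), ∀ x ∈ Aa, (T ^ m) x ∈ Aa := by
    intro m x hx
    obtain ⟨v, hv⟩ := (Submodule.mem_span_range_iff_exists_fun ℂ).mp hx
    rw [← hv, map_sum]
    refine Submodule.sum_mem _ fun k _ => ?_
    rw [map_smul]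
    refine Submodule.smul_mem _ _ ?_
    rw [← zpow_natCast T (k : ℕ)]
    have h1 : (T ^ m) ((T ^ (((k : ℕ) : ℕ) : ℤ)) a) = (T ^ (m + ((k : ℕ) : ℤ))) a := by
      rw [zpow_add]; rfl
    rw [h1]; exact hmema _
  -- L on the generators is given by R
  have hLR : ∀ (k : Fin N) (j : Fin r) (n : Fin ℓ),
      L ((T ^ (k : ℕ)) a) j n = R (j, n) k := by
    intro k j n
    rw [hkeyL, hRdef]
    congr 1
    rw [← zpow_natCast T (k : ℕ)]
    have h1 : (T ^ (-((r : ℤ) * (n : ℤ)))) ((T ^ (((k : ℕ) : ℕ) : ℤ)) a)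
        = (T ^ (-((r : ℤ) * (n : ℤ)) + ((k : ℕ) : ℤ))) a := by rw [zpow_add]; rfl
    rw [h1, show -((r : ℤ) * (n : ℤ)) + ((k : ℕ) : ℤ)
        = ((N : ℤ) + (k : ℤ) - (r : ℤ) * (n : ℤ)) + ((N : ℕ) : ℤ) * (-1) by push_cast; ring,
      aux_shift T hTNz]
  -- L applied to a combination of generators
  have hstep : ∀ (v : Fin N → ℂ) (j : Fin r) (n : Fin ℓ),
      L (∑ k : Fin N, v k • (T ^ (k : ℕ)) a) j n = ∑ k : Fin N, v k * R (j, n) k := by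
    intro v j n
    rw [hkeyL, map_sum, inner_sum]
    refine Finset.sum_congr rfl fun k _ => ?_
    rw [map_smul, inner_smul_right, ← hkeyL, hLR]
  -- injectivity of the sampling map on Aa
  have hinj : ∀ x ∈ Aa, (∀ (j : Fin r) (n : Fin ℓ), L x j n = 0) → x = 0 := by
    intro x hx h0
    obtain ⟨v, hv⟩ := (Submodule.mem_span_range_iff_exists_fun ℂ).mp hx
    have hR0 : R.mulVec v = 0 := by
      ext p
      have hL := h0 p.1 p.2
      rw [← hv, hstep v p.1 p.2] at hL
      show ∑ k, R p k * v k = 0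
      rw [← hL]
      exact Finset.sum_congr rfl fun k _ => mul_comm _ _
    have hv0 : v = 0 := by
      calc v = (1 : Matrix (Fin N) (Fin N) ℂ).mulVec v := (Matrix.one_mulVec v).symm
        _ = (Q * R).mulVec v := by rw [hQR]
        _ = Q.mulVec (R.mulVec v) := (Matrix.mulVec_mulVec v Q R).symm
        _ = 0 := by rw [hR0, Matrix.mulVec_zero]
    rw [← hv, hv0]
    simp
  -- the dual family d and the c's
  set d : Fin r × Fin ℓ → H := fun p => ∑ k : Fin N, Q k p • (T ^ (k : ℕ)) a with hd_def
  set c : Fin r → H := fun j => d (j, ⟨0, hl⟩) with hc_def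
  have hdAa : ∀ p, d p ∈ Aa := by
    intro p
    simp only [hd_def]
    exact Submodule.sum_mem _ fun k _ =>
      Submodule.smul_mem _ _ (Submodule.subset_span ⟨k, rfl⟩)
  have hcAa : ∀ j, c j ∈ Aa := fun j => hdAa _
  have hLd : ∀ (p : Fin r × Fin ℓ) (j' : Fin r) (n' : Fin ℓ),
      L (d p) j' n' = if (j', n') = p then 1 else 0 := by
    intro p j' n'
    simp only [hd_def]
    rw [hstep (fun k => Q k p) j' n']
    have h1 : ∑ k, Q k p * R (j', n') k = (R * Q) (j', n') p := by
      rw [Matrix.mul_apply]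
      exact Finset.sum_congr rfl fun k _ => mul_comm _ _
    rw [show ∑ k : Fin N, (fun k => Q k p) k * R (j', n') k
        = ∑ k : Fin N, Q k p * R (j', n') k from rfl, h1, hRQ, Matrix.one_apply]
  -- generators in terms of d
  have heRd : ∀ k : Fin N, (T ^ (k : ℕ)) a = ∑ p : Fin r × Fin ℓ, R p k • d p := by
    intro k
    symm
    simp only [hd_def]
    calc ∑ p : Fin r × Fin ℓ, R p k • ∑ k' : Fin N, Q k' p • (T ^ (k' : ℕ)) a
        = ∑ p : Fin r × Fin ℓ, ∑ k' : Fin N, (R p k * Q k' p) • (T ^ (k' : ℕ)) a := by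
          refine Finset.sum_congr rfl fun p _ => ?_
          rw [Finset.smul_sum]
          exact Finset.sum_congr rfl fun k' _ => (smul_smul _ _ _)
      _ = ∑ k' : Fin N, ∑ p : Fin r × Fin ℓ, (R p k * Q k' p) • (T ^ (k' : ℕ)) a :=
          Finset.sum_comm
      _ = ∑ k' : Fin N, ((Q * R) k' k) • (T ^ (k' : ℕ)) a := by
          refine Finset.sum_congr rfl fun k' _ => ?_
          rw [← Finset.sum_smul, Matrix.mul_apply]
          congr 1
          exact Finset.sum_congr rfl fun p _ => by ring
      _ = (T ^ (k : ℕ)) a := by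
          rw [hQR]
          simp [Matrix.one_apply, ite_smul]
  -- expansion lemma
  have hexp : ∀ x ∈ Aa, x = ∑ p : Fin r × Fin ℓ, L x p.1 p.2 • d p := by
    intro x hx
    obtain ⟨v, hv⟩ := (Submodule.mem_span_range_iff_exists_fun ℂ).mp hx
    rw [← hv]
    calc ∑ k : Fin N, v k • (T ^ (k : ℕ)) a
        = ∑ k : Fin N, v k • ∑ p : Fin r × Fin ℓ, R p k • d p := by
          refine Finset.sum_congr rfl fun k _ => ?_
          rw [← heRd k]
      _ = ∑ k : Fin N, ∑ p : Fin r × Fin ℓ, (v k * R p k) • d p := by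
          refine Finset.sum_congr rfl fun k _ => ?_
          rw [Finset.smul_sum]
          exact Finset.sum_congr rfl fun p _ => (smul_smul _ _ _)
      _ = ∑ p : Fin r × Fin ℓ, ∑ k : Fin N, (v k * R p k) • d p := Finset.sum_comm
      _ = ∑ p : Fin r × Fin ℓ, (∑ k : Fin N, v k * R p k) • d p := by
          refine Finset.sum_congr rfl fun p _ => ?_
          rw [Finset.sum_smul]
      _ = ∑ p : Fin r × Fin ℓ, L (∑ k : Fin N, v k • (T ^ (k : ℕ)) a) p.1 p.2 • d p := by
          refine Finset.sum_congr rfl fun p _ => ?_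
          congr 1
          exact (hstep v p.1 p.2).symm
  -- linear independence of d
  have hd_li : LinearIndependent ℂ d := by
    rw [Fintype.linearIndependent_iff]
    intro g hg
    have hg' : ∑ k : Fin N, Q.mulVec g k • (T ^ (k : ℕ)) a = 0 := by
      rw [← hg]
      calc ∑ k : Fin N, Q.mulVec g k • (T ^ (k : ℕ)) a
          = ∑ k : Fin N, ∑ p : Fin r × Fin ℓ, (Q k p * g p) • (T ^ (k : ℕ)) a := by
            refine Finset.sum_congr rfl fun k _ => ?_
            rw [show Q.mulVec g k = ∑ p, Q k p * g p from rfl, Finset.sum_smul]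
        _ = ∑ p : Fin r × Fin ℓ, ∑ k : Fin N, (Q k p * g p) • (T ^ (k : ℕ)) a :=
            Finset.sum_comm
        _ = ∑ p : Fin r × Fin ℓ, g p • d p := by
            refine Finset.sum_congr rfl fun p _ => ?_
            simp only [hd_def]
            rw [Finset.smul_sum]
            refine Finset.sum_congr rfl fun k _ => ?_
            rw [smul_smul, mul_comm]
    have hQg : ∀ k, Q.mulVec g k = 0 := Fintype.linearIndependent_iff.mp hind _ hg'
    have hg0 : g = 0 := by
      have h1 : Q.mulVec g = 0 := funext hQg
      calc g = (1 : Matrix (Fin r × Fin ℓ) (Fin r × Fin ℓ) ℂ).mulVec g := (Matrix.one_mulVec g).symm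
        _ = (R * Q).mulVec g := by rw [hRQ]
        _ = R.mulVec (Q.mulVec g) := (Matrix.mulVec_mulVec g R Q).symm
        _ = 0 := by rw [h1, Matrix.mulVec_zero]
    exact fun p => congrFun hg0 p
  -- the interpolation values of c
  have hLc0 : ∀ (j j' : Fin r) (m : Fin ℓ),
      ⟪b j', (T ^ (-((r : ℤ) * (m : ℤ)))) (c j)⟫ = if (j', m) = (j, ⟨0, hl⟩) then 1 else 0 := by
    intro j j' m
    rw [← hkeyL]
    exact hLd (j, ⟨0, hl⟩) j' m
  -- key lemma: T^{rn} c_j = d (j, n)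
  have hTd : ∀ (j : Fin r) (n : Fin ℓ), (T ^ ((r : ℤ) * (n : ℤ))) (c j) = d (j, n) := by
    intro j n
    have hcfix : (T ^ ((N : ℕ) : ℤ)) (c j) = c j := hAafix _ (hcAa j)
    have hsub : (T ^ ((r : ℤ) * (n : ℤ))) (c j) - d (j, n) = 0 := by
      apply hinj _ (Submodule.sub_mem _ (hmapAa _ _ (hcAa j)) (hdAa (j, n)))
      intro j' n'
      have hsplit : L ((T ^ ((r : ℤ) * (n : ℤ))) (c j) - d (j, n)) j' n'
          = L ((T ^ ((r : ℤ) * (n : ℤ))) (c j)) j' n' - L (d (j, n)) j' n' :=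
        inner_sub_right _ _ _
      rw [hsplit, hLd (j, n) j' n']
      have hstep2 : L ((T ^ ((r : ℤ) * (n : ℤ))) (c j)) j' n'
          = ⟪b j', (T ^ ((r : ℤ) * (n : ℤ) - (r : ℤ) * (n' : ℤ))) (c j)⟫ := by
        rw [hkeyL]
        congr 1
        have h1 : (T ^ (-((r : ℤ) * (n' : ℤ)) + (r : ℤ) * (n : ℤ))) (c j)
            = (T ^ (-((r : ℤ) * (n' : ℤ)))) ((T ^ ((r : ℤ) * (n : ℤ))) (c j)) := by
          rw [zpow_add]; rfl
        rw [← h1]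
        congr 1
        ring
      rw [hstep2]
      have hn'lt := n'.isLt
      have hnlt := n.isLt
      rcases lt_trichotomy (n : ℕ) (n' : ℕ) with hlt | heq | hgt
      · -- n < n' : exponent = -(r * (n' - n)) with 0 < n' - n < ℓ
        have hm : (n' : ℕ) - (n : ℕ) < ℓ := by omega
        have hcast : (((⟨(n' : ℕ) - (n : ℕ), hm⟩ : Fin ℓ) : ℕ) : ℤ) = (n' : ℤ) - (n : ℤ) := by
          show ((((n' : ℕ) - (n : ℕ) : ℕ)) : ℤ) = _
          omega
        rw [show (r : ℤ) * (n : ℤ) - (r : ℤ) * (n' : ℤ)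
            = -((r : ℤ) * (((⟨(n' : ℕ) - (n : ℕ), hm⟩ : Fin ℓ) : ℕ) : ℤ)) by rw [hcast]; ring]
        rw [hLc0 j j' ⟨(n' : ℕ) - (n : ℕ), hm⟩]
        rw [if_neg, if_neg]
        · simp
        · intro h
          have h2 : (n' : ℕ) = (n : ℕ) := congrArg (fun p : Fin r × Fin ℓ => (p.2 : ℕ)) h
          omega
        · intro h
          have h2 : (n' : ℕ) - (n : ℕ) = 0 := congrArg (fun p : Fin r × Fin ℓ => (p.2 : ℕ)) h
          omega
      · -- n = n'
        have hnn : n' = n := Fin.ext heq.symm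
        subst hnn
        rw [show (r : ℤ) * (n' : ℤ) - (r : ℤ) * (n' : ℤ)
            = -((r : ℤ) * (((⟨0, hl⟩ : Fin ℓ) : ℕ) : ℤ)) by
          show _ = -((r : ℤ) * ((0 : ℕ) : ℤ)); push_cast; ring]
        rw [hLc0 j j' ⟨0, hl⟩]
        by_cases hj : j' = j
        · subst hj; simp
        · rw [if_neg, if_neg]
          · simp
          · intro h; exact hj (congrArg Prod.fst h)
          · intro h; exact hj (congrArg Prod.fst h)
      · -- n' < n : exponent = -(r * (ℓ - (n - n'))) + N
        have hm : ℓ - ((n : ℕ) - (n' : ℕ)) < ℓ := by omega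
        have hcast : (((⟨ℓ - ((n : ℕ) - (n' : ℕ)), hm⟩ : Fin ℓ) : ℕ) : ℤ)
            = (ℓ : ℤ) - ((n : ℤ) - (n' : ℤ)) := by
          show (((ℓ - ((n : ℕ) - (n' : ℕ)) : ℕ)) : ℤ) = _
          omega
        have hshift := aux_shift T hcfix
          (-((r : ℤ) * (((⟨ℓ - ((n : ℕ) - (n' : ℕ)), hm⟩ : Fin ℓ) : ℕ) : ℤ))) 1
        rw [show (r : ℤ) * (n : ℤ) - (r : ℤ) * (n' : ℤ)
            = -((r : ℤ) * (((⟨ℓ - ((n : ℕ) - (n' : ℕ)), hm⟩ : Fin ℓ) : ℕ) : ℤ))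
              + ((N : ℕ) : ℤ) * 1 by rw [hcast, hNz]; ring]
        rw [hshift, hLc0 j j' ⟨ℓ - ((n : ℕ) - (n' : ℕ)), hm⟩]
        rw [if_neg, if_neg]
        · simp
        · intro h
          have h2 : (n' : ℕ) = (n : ℕ) := congrArg (fun p : Fin r × Fin ℓ => (p.2 : ℕ)) h
          omega
        · intro h
          have h2 : ℓ - ((n : ℕ) - (n' : ℕ)) = 0 :=
            congrArg (fun p : Fin r × Fin ℓ => (p.2 : ℕ)) h
          omega
    have := sub_eq_zero.mp hsub
    exact this
  have hfun : (fun p : Fin r × Fin ℓ => (T ^ ((r : ℤ) * (p.2 : ℤ))) (c p.1)) = d :=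
    funext fun p => hTd p.1 p.2
  -- assemble
  refine ⟨c, ⟨hcAa, ?_, ?_, ?_⟩, ?_, ?_⟩
  · -- linear independence
    rw [hfun]; exact hd_li
  · -- span
    rw [hfun]
    apply le_antisymm
    · rw [Submodule.span_le]
      rintro - ⟨p, rfl⟩
      exact hdAa p
    · rw [Submodule.span_le]
      rintro - ⟨k, rfl⟩
      show (T ^ (k : ℕ)) a ∈ Submodule.span ℂ (Set.range d)
      rw [heRd k]
      exact Submodule.sum_mem _ fun p _ =>
        Submodule.smul_mem _ _ (Submodule.subset_span ⟨p, rfl⟩)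
  · -- expansion
    intro x hx
    have h := hexp x hx
    rw [Fintype.sum_prod_type] at h
    simpa only [← hTd] using h
  · -- uniqueness
    intro c' hc'
    obtain ⟨h1, h2, h3, h4⟩ := hc'
    set d' : Fin r × Fin ℓ → H := fun p => (T ^ ((r : ℤ) * (p.2 : ℤ))) (c' p.1) with hd'_def
    have hd'Aa : ∀ p, d' p ∈ Aa := fun p => hmapAa _ _ (h1 p.1)
    have hco : ∀ (p : Fin r × Fin ℓ) (j' : Fin r) (n' : Fin ℓ),
        L (d' p) j' n' = if (j', n') = p then 1 else 0 := by
      intro p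
      have hrep : d' p = ∑ q : Fin r × Fin ℓ, L (d' p) q.1 q.2 • d' q := by
        rw [Fintype.sum_prod_type]
        exact h4 (d' p) (hd'Aa p)
      have hzero : ∑ q : Fin r × Fin ℓ,
          (L (d' p) q.1 q.2 - if q = p then 1 else 0) • d' q = 0 := by
        simp only [sub_smul, Finset.sum_sub_distrib]
        rw [← hrep]
        have hone : ∑ q : Fin r × Fin ℓ, (if q = p then (1 : ℂ) else 0) • d' q = d' p := by
          simp [ite_smul]
        rw [hone, sub_self]
      have hg := Fintype.linearIndependent_iff.mp h2 _ hzero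
      intro j' n'
      have := hg (j', n')
      have h' := sub_eq_zero.mp this
      exact h'
    have hdd : ∀ p, d' p = d p := by
      intro p
      have h0 : d' p - d p = 0 := by
        apply hinj _ (Submodule.sub_mem _ (hd'Aa p) (hdAa p))
        intro j' n'
        have hsplit : L (d' p - d p) j' n' = L (d' p) j' n' - L (d p) j' n' :=
          inner_sub_right _ _ _
        rw [hsplit, hco p j' n', hLd p j' n', sub_self]
      exact sub_eq_zero.mp h0
    funext j
    have hc'j : c' j = d' (j, ⟨0, hl⟩) := by
      show c' j = (T ^ ((r : ℤ) * (((⟨0, hl⟩ : Fin ℓ) : ℕ) : ℤ))) (c' j)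
      rw [show (r : ℤ) * (((⟨0, hl⟩ : Fin ℓ) : ℕ) : ℤ) = 0 by
        show (r : ℤ) * ((0 : ℕ) : ℤ) = 0; simp]
      rw [zpow_zero]
      rfl
    rw [hc'j, hdd]
  · -- interpolation
    intro j j' n
    rw [show c j = d (j, ⟨0, hl⟩) from rfl, hLd (j, ⟨0, hl⟩) j' n]
    by_cases hj : j = j'
    · by_cases hn : n = ⟨0, hl⟩
      · subst hj; subst hn; simp
      · rw [if_neg, if_neg]
        · intro h; exact hn h.2
        · intro h
          rw [Prod.mk.injEq] at h
          exact hn h.2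
    · rw [if_neg, if_neg]
      · intro h; exact hj h.1
      · intro h
        rw [Prod.mk.injEq] at h
        exact hj h.1.symm
end
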